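/- If a horizontal line L(h) above the terrain T contains a point u that sees every point of T, then there exists a point u' on L(h) with x(v₁) ≤ x(u') ≤ x(vₙ) that also sees every point of T. -/
import Mathlib


open Set

/-- An x-monotone polygonal terrain: vertices `x 0 < x 1 < ⋯ < x N` on the x-axis,
heights given by `f`, which is affine with slope `m i` and intercept `c i` on the
`i`-th edge. -/
structure Terrain where
  N : ℕ
  hN : 1 ≤ N
  x : Fin (N + 1) → ℝ
  hx : StrictMono x
  f : ℝ → ℝ
  m : Fin N → ℝ
  c : Fin N → ℝ
  haff : ∀ i : Fin N, ∀ t ∈ Set.Icc (x i.castSucc) (x i.succ), f t = m i * t + c i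

/-- Left endpoint of the domain of the terrain. -/
def Terrain.a (T : Terrain) : ℝ := T.x 0

/-- Right endpoint of the domain of the terrain. -/
def Terrain.b (T : Terrain) : ℝ := T.x (Fin.last T.N)

/-- Visibility: the segment from terrain point `p` to guard `u` stays on or above
the terrain. -/
def Terrain.Vis (T : Terrain) (p u : ℝ × ℝ) : Prop :=
  ∀ q ∈ segment ℝ p u, q.1 ∈ Set.Icc T.a T.b → T.f q.1 ≤ q.2

/-- Full visibility of the `i`-th edge from the point `u`. -/
def Terrain.EdgeVis (T : Terrain) (i : Fin T.N) (u : ℝ × ℝ) : Prop :=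
  ∀ t ∈ Set.Icc (T.x i.castSucc) (T.x i.succ), T.Vis (t, T.f t) u

/-- Moving a guard at height `h` rightward from `(s, h)` to `(a', h)`, still left of
the terrain point `(t, f t)`, preserves visibility of that point. -/
lemma move_right (T : Terrain) (h t s a' : ℝ) (hfh : T.f t ≤ h)
    (hs : s ≤ a') (hat : a' ≤ t)
    (hvis : T.Vis (t, T.f t) (s, h)) : T.Vis (t, T.f t) (a', h) := by
  intro q hq hq1
  rw [segment_eq_image] at hq
  obtain ⟨r, ⟨hr0, hr1⟩, hqe⟩ := hq
  have hq1e : q.1 = (1 - r) * t + r * a' := by rw [← hqe]; simp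
  have hq2e : q.2 = (1 - r) * T.f t + r * h := by rw [← hqe]; simp
  rcases eq_or_lt_of_le (hs.trans hat) with hst | hst
  · -- s = t, hence a' = t
    have ha : a' = t := le_antisymm hat (hst ▸ hs)
    have : q.1 = t := by rw [hq1e, ha]; ring
    rw [this]
    rw [hq2e]
    nlinarith
  · set r' : ℝ := r * (t - a') / (t - s) with hr'
    have hts : (0:ℝ) < t - s := by linarith
    have hr'0 : 0 ≤ r' := by
      apply div_nonneg _ hts.le
      nlinarith
    have hr'r : r' ≤ r := by
      rw [div_le_iff₀ hts]
      nlinarith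
    set q' : ℝ × ℝ := ((1 - r') * t + r' * s, (1 - r') * T.f t + r' * h) with hq'
    have hmem : q' ∈ segment ℝ (t, T.f t) (s, h) := by
      rw [segment_eq_image]
      exact ⟨r', ⟨hr'0, hr'r.trans hr1⟩, by simp [hq']⟩
    have hq'1 : q'.1 = q.1 := by
      show (1 - r') * t + r' * s = q.1
      rw [hq1e, hr']
      field_simp
      ring
    have := hvis q' hmem (by rw [hq'1]; exact hq1)
    rw [hq'1] at this
    refine this.trans ?_
    simp only [hq']
    rw [hq2e]
    nlinarith

/-- Moving a guard at height `h` leftward from `(s, h)` to `(b', h)`, still right of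
the terrain point `(t, f t)`, preserves visibility of that point. -/
lemma move_left (T : Terrain) (h t s b' : ℝ) (hfh : T.f t ≤ h)
    (hs : b' ≤ s) (hat : t ≤ b')
    (hvis : T.Vis (t, T.f t) (s, h)) : T.Vis (t, T.f t) (b', h) := by
  intro q hq hq1
  rw [segment_eq_image] at hq
  obtain ⟨r, ⟨hr0, hr1⟩, hqe⟩ := hq
  have hq1e : q.1 = (1 - r) * t + r * b' := by rw [← hqe]; simp
  have hq2e : q.2 = (1 - r) * T.f t + r * h := by rw [← hqe]; simp
  rcases eq_or_lt_of_le (hat.trans hs) with hst | hst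
  · have hb : b' = t := le_antisymm (hst ▸ hs) hat
    have : q.1 = t := by rw [hq1e, hb]; ring
    rw [this, hq2e]
    nlinarith
  · set r' : ℝ := r * (b' - t) / (s - t) with hr'
    have hts : (0:ℝ) < s - t := by linarith
    have hr'0 : 0 ≤ r' := by
      apply div_nonneg _ hts.le
      nlinarith
    have hr'r : r' ≤ r := by
      rw [div_le_iff₀ hts]
      nlinarith
    set q' : ℝ × ℝ := ((1 - r') * t + r' * s, (1 - r') * T.f t + r' * h) with hq'
    have hmem : q' ∈ segment ℝ (t, T.f t) (s, h) := by
      rw [segment_eq_image]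
      exact ⟨r', ⟨hr'0, hr'r.trans hr1⟩, by simp [hq']⟩
    have hq'1 : q'.1 = q.1 := by
      show (1 - r') * t + r' * s = q.1
      rw [hq1e, hr']
      field_simp
      ring
    have := hvis q' hmem (by rw [hq'1]; exact hq1)
    rw [hq'1] at this
    refine this.trans ?_
    simp only [hq']
    rw [hq2e]
    nlinarith

/-- If some point of the horizontal line `L(h)` above `T` sees every point of `T`,
then some point `u'` of `L(h)` with `x(v₁) ≤ x(u') ≤ x(vₙ)` sees every point of `T`. -/
theorem stmt10 (T : Terrain) (h : ℝ)
    (hh : ∀ t ∈ Set.Icc T.a T.b, T.f t ≤ h)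
    (u : ℝ × ℝ) (hu : u.2 = h)
    (hsee : ∀ t ∈ Set.Icc T.a T.b, T.Vis (t, T.f t) u) :
    ∃ u' : ℝ × ℝ, u'.2 = h ∧ T.a ≤ u'.1 ∧ u'.1 ≤ T.b ∧
      ∀ t ∈ Set.Icc T.a T.b, T.Vis (t, T.f t) u' := by
  have hue : ((u.1, h) : ℝ × ℝ) = u := Prod.ext rfl hu.symm
  have hab : T.a ≤ T.b := T.hx.monotone (Fin.zero_le _)
  rcases le_or_gt u.1 T.a with hua | hua
  · refine ⟨(T.a, h), rfl, le_refl _, hab, fun t ht => ?_⟩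
    exact move_right T h t u.1 T.a (hh t ht) hua ht.1
      (by rw [hue]; exact hsee t ht)
  · rcases le_or_gt T.b u.1 with hub | hub
    · refine ⟨(T.b, h), rfl, hab, le_refl _, fun t ht => ?_⟩
      exact move_left T h t u.1 T.b (hh t ht) hub ht.2
        (by rw [hue]; exact hsee t ht)
    · exact ⟨u, hu, hua.le, hub.le, hsee⟩
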